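/- Let I = {1,…,κ} with κ ≥ 2, and for each i ∈ I let A_i ∈ ℝ^{2×2} be invertible with ‖A_i‖ < 1. Suppose there exist θ ∈ S¹ and 0 < β < π/2 such that A_i(cl X(θ,β)) ⊂ X(θ,β) and A_iᵀ(cl X(θ,β)) ⊂ X(θ,β) for every i ∈ I. Then for all finite words 𝚒, 𝚓, α₁(A_{𝚒𝚓}) ≥ cos²(β)·α₁(A_𝚒)·α₁(A_𝚓). -/

import Mathlib

open MeasureTheory Filter Matrix Real Set

noncomputable section

abbrev E2 := EuclideanSpace ℝ (Fin 2)

noncomputable def mLin (A : Matrix (Fin 2) (Fin 2) ℝ) : E2 →L[ℝ] E2 :=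
  LinearMap.toContinuousLinearMap (Matrix.toEuclideanLin A)

/-- largest singular value = operator norm -/
noncomputable def a1 (A : Matrix (Fin 2) (Fin 2) ℝ) : ℝ := ‖mLin A‖

/-- smallest singular value -/
noncomputable def a2 (A : Matrix (Fin 2) (Fin 2) ℝ) : ℝ := |A.det| / a1 A

/-- product of the matrices along a finite word -/
noncomputable def wprod {κ : ℕ} (A : Fin κ → Matrix (Fin 2) (Fin 2) ℝ) (l : List (Fin κ)) :
    Matrix (Fin 2) (Fin 2) ℝ := (l.map A).prod

/-- the cone X(θ,β) -/
def cone (θ : E2) (β : ℝ) : Set E2 :=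
  {x | x ≠ 0 ∧ Real.cos (β / 2) * ‖x‖ < |(inner ℝ θ x : ℝ)|}

/-- unoriented angle between the lines spanned by two vectors -/
noncomputable def uangle (u v : E2) : ℝ :=
  Real.arccos (|(inner ℝ u v : ℝ)| / (‖u‖ * ‖v‖))

/-- real inner product, as an abbreviation -/
def ip (x y : E2) : ℝ := inner ℝ x y

/-- perpendicular vector -/
def perp (u : E2) : E2 := (WithLp.equiv 2 _).symm ![-(u 1), u 0]

lemma perp_apply0 (u : E2) : perp u 0 = -(u 1) := rfl
lemma perp_apply1 (u : E2) : perp u 1 = u 0 := rfl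

lemma inner_comp (x y : E2) : ip x y = x 0 * y 0 + x 1 * y 1 := by
  simp [ip, PiLp.inner_apply, Fin.sum_univ_two, RCLike.inner_apply, conj_trivial]
  ring

lemma ip_self (x : E2) : ip x x = ‖x‖ ^ 2 := real_inner_self_eq_norm_sq x

lemma ip_comm (x y : E2) : ip x y = ip y x := real_inner_comm y x

lemma unit_sq (u : E2) (hu : ‖u‖ = 1) : u 0 ^ 2 + u 1 ^ 2 = 1 := by
  have h := ip_self u
  rw [inner_comp, hu] at h
  nlinarith

lemma parseval (u : E2) (hu : ‖u‖ = 1) (x y : E2) :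
    ip x y = ip x u * ip y u + ip x (perp u) * ip y (perp u) := by
  have h := unit_sq u hu
  simp only [inner_comp, perp_apply0, perp_apply1]
  linear_combination -(x 0 * y 0 + x 1 * y 1) * h

lemma perp_decomp (u : E2) (hu : ‖u‖ = 1) (x : E2) :
    x = ip x u • u + ip x (perp u) • (perp u) := by
  have h := unit_sq u hu
  ext i
  fin_cases i <;>
    simp only [Fin.zero_eta, Fin.mk_one, PiLp.add_apply, PiLp.smul_apply, smul_eq_mul,
      inner_comp, perp_apply0, perp_apply1, Fin.isValue]
  · linear_combination -x 0 * h
  · linear_combination -x 1 * h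

lemma perp_norm (u : E2) (hu : ‖u‖ = 1) : ‖perp u‖ = 1 := by
  have h := unit_sq u hu
  have h2 : ip (perp u) (perp u) = 1 := by
    rw [inner_comp, perp_apply0, perp_apply1]; nlinarith
  rw [ip_self] at h2
  nlinarith [norm_nonneg (perp u)]

lemma perp_inner (u : E2) : ip u (perp u) = 0 := by
  rw [inner_comp, perp_apply0, perp_apply1]; ring

section ConeLemmas

variable {θ : E2} {β : ℝ}

lemma cone_smul {c : ℝ} (hc : c ≠ 0) {x : E2} (hx : x ∈ cone θ β) : c • x ∈ cone θ β := by
  obtain ⟨hx0, hxlt⟩ := hx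
  refine ⟨smul_ne_zero hc hx0, ?_⟩
  rw [norm_smul, real_inner_smul_right, abs_mul, Real.norm_eq_abs]
  calc Real.cos (β/2) * (|c| * ‖x‖) = |c| * (Real.cos (β/2) * ‖x‖) := by ring
  _ < |c| * |(inner ℝ θ x : ℝ)| := by
      exact mul_lt_mul_of_pos_left hxlt (abs_pos.mpr hc)

lemma mem_closure_cone_le {x : E2} (hx : x ∈ closure (cone θ β)) :
    Real.cos (β/2) * ‖x‖ ≤ |(inner ℝ θ x : ℝ)| := by
  have hcl : IsClosed {y : E2 | Real.cos (β/2) * ‖y‖ ≤ |(inner ℝ θ y : ℝ)|} :=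
    isClosed_le (continuous_const.mul continuous_norm)
      ((Continuous.inner continuous_const continuous_id).abs)
  exact closure_minimal (fun y (hy : y ∈ cone θ β) => le_of_lt hy.2) hcl hx

lemma theta_mem_cone (hθ : ‖θ‖ = 1) (hβ : 0 < β) (hβ' : β < π/2) : θ ∈ cone θ β := by
  have h0 : θ ≠ 0 := fun h => by simp [h] at hθ
  have hlt : Real.cos (β/2) < 1 := by
    have h1 : Real.cos (β/2) < Real.cos 0 :=
      Real.cos_lt_cos_of_nonneg_of_le_pi le_rfl (by linarith [Real.pi_pos]) (by linarith)
    rwa [Real.cos_zero] at h1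
  refine ⟨h0, ?_⟩
  have : (inner ℝ θ θ : ℝ) = 1 := by rw [real_inner_self_eq_norm_sq, hθ]; norm_num
  rw [this, hθ]
  simpa using hlt

lemma cos_half_pos (hβ : 0 < β) (hβ' : β < π/2) : 0 < Real.cos (β/2) :=
  Real.cos_pos_of_mem_Ioo ⟨by linarith [Real.pi_pos], by linarith [Real.pi_pos]⟩

lemma cos_half_lt_one (hβ : 0 < β) (hβ' : β < π/2) : Real.cos (β/2) < 1 := by
  have h1 : Real.cos (β/2) < Real.cos 0 :=
    Real.cos_lt_cos_of_nonneg_of_le_pi le_rfl (by linarith [Real.pi_pos]) (by linarith)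
  rwa [Real.cos_zero] at h1

end ConeLemmas

lemma toEuc_mul (M N : Matrix (Fin 2) (Fin 2) ℝ) (x : E2) :
    Matrix.toEuclideanLin (M * N) x
      = Matrix.toEuclideanLin M (Matrix.toEuclideanLin N x) := by
  simp [Matrix.toEuclideanLin_apply, Matrix.mulVec_mulVec]

/-- products of cone-preserving matrices preserve the cone -/
lemma prod_preserves (θ : E2) (β : ℝ) :
    ∀ (l : List (Matrix (Fin 2) (Fin 2) ℝ)), l ≠ [] →
    (∀ M ∈ l, ∀ x ∈ closure (cone θ β), x ≠ 0 → Matrix.toEuclideanLin M x ∈ cone θ β) →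
    ∀ x ∈ closure (cone θ β), x ≠ 0 → Matrix.toEuclideanLin l.prod x ∈ cone θ β := by
  intro l
  induction l with
  | nil => intro h; exact absurd rfl h
  | cons M l' ih =>
    intro _ h x hx hx0
    rcases eq_or_ne l' [] with hl' | hl'
    · subst hl'
      simpa using h M (List.mem_cons_self) x hx hx0
    · rw [List.prod_cons, toEuc_mul]
      have hy := ih hl' (fun N hN => h N (List.mem_cons_of_mem _ hN)) x hx hx0
      exact h M (List.mem_cons_self) _ (subset_closure hy) hy.1


lemma real_aux (c n A1 A2 B1 B2 : ℝ) (hc : 0 < c) (hc1 : c < 1) (hn : 0 ≤ n)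
    (h2 : A1^2 + A2^2 = n^2) (h3 : B1^2 + B2^2 = 1)
    (hA1 : c*n ≤ |A1|) (hB1 : c ≤ |B1|) :
    (2*c^2 - 1) * n ≤ |A1*B1 + A2*B2| := by
  have habs : |A1*B1| - |A2*B2| ≤ |A1*B1 + A2*B2| := by
    have h := abs_sub_abs_le_abs_sub (A1*B1) (-(A2*B2))
    simpa [sub_neg_eq_add] using h
  rw [abs_mul, abs_mul] at habs
  have e0 : (c*n)*c ≤ |A1| * |B1| := by
    have q1 : (c*n)*c ≤ |A1| * c := mul_le_mul_of_nonneg_right hA1 hc.le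
    have q2 : |A1| * c ≤ |A1| * |B1| := mul_le_mul_of_nonneg_left hB1 (abs_nonneg A1)
    linarith
  have e1 : |A2| * |B2| ≤ (1 - c^2)*n := by
    have hA2sq : A2^2 ≤ (1-c^2)*n^2 := by nlinarith [hA1, sq_abs A1, mul_nonneg hc.le hn]
    have hB2sq : B2^2 ≤ 1-c^2 := by nlinarith [hB1, sq_abs B1]
    have hXnn : 0 ≤ |A2| * |B2| := mul_nonneg (abs_nonneg _) (abs_nonneg _)
    have hYnn : 0 ≤ (1 - c^2)*n := mul_nonneg (by nlinarith) hn
    have hsq : (|A2| * |B2|)^2 ≤ ((1 - c^2)*n)^2 := by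
      have hm := mul_le_mul hA2sq hB2sq (sq_nonneg B2) (by nlinarith [sq_nonneg n])
      calc (|A2| * |B2|)^2 = A2^2 * B2^2 := by rw [mul_pow, sq_abs, sq_abs]
      _ ≤ (1-c^2)*n^2 * (1-c^2) := hm
      _ = ((1 - c^2)*n)^2 := by ring
    nlinarith [hsq, hXnn, hYnn]
  nlinarith [habs, e0, e1]

lemma inner_lower (θ : E2) (hθ : ‖θ‖ = 1) (β : ℝ) (hβ : 0 < β) (hβ' : β < π/2)
    (v : E2) (hv : ‖v‖ = 1) (hvS : Real.cos (β/2) ≤ |ip θ v|)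
    (y : E2) (hy : Real.cos (β/2) * ‖y‖ ≤ |ip θ y|) :
    Real.cos β * ‖y‖ ≤ |ip y v| := by
  have hc : 0 < Real.cos (β/2) := cos_half_pos hβ hβ'
  have hc1 : Real.cos (β/2) < 1 := cos_half_lt_one hβ hβ'
  have h2 : (ip y θ)^2 + (ip y (perp θ))^2 = ‖y‖^2 := by
    have h := parseval θ hθ y y
    rw [ip_self] at h
    nlinarith [h]
  have h3 : (ip v θ)^2 + (ip v (perp θ))^2 = 1 := by
    have h := parseval θ hθ v v
    rw [ip_self, hv] at h
    nlinarith [h]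
  have hA1 : Real.cos (β/2) * ‖y‖ ≤ |ip y θ| := by rwa [ip_comm]
  have hB1 : Real.cos (β/2) ≤ |ip v θ| := by rwa [ip_comm]
  have key := real_aux (Real.cos (β/2)) ‖y‖ (ip y θ) (ip y (perp θ)) (ip v θ) (ip v (perp θ))
    hc hc1 (norm_nonneg y) h2 h3 hA1 hB1
  have hcosb : Real.cos β = 2*(Real.cos (β/2))^2 - 1 := by
    rw [show β = 2*(β/2) by ring, Real.cos_two_mul]
    ring_nf
  rw [parseval θ hθ y v, hcosb]
  exact key


set_option maxHeartbeats 1600000 in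
lemma core (θ : E2) (hθ : ‖θ‖ = 1) (β : ℝ) (hβ : 0 < β) (hβ' : β < π/2)
    (f : E2 →L[ℝ] E2)
    (hT : ∀ x ∈ closure (cone θ β), x ≠ 0 →
      (ContinuousLinearMap.adjoint f) (f x) ∈ cone θ β) :
    ∀ y ∈ closure (cone θ β), Real.cos β * ‖f‖ * ‖y‖ ≤ ‖f y‖ := by
  have hθ0 : θ ≠ 0 := fun h => by simp [h] at hθ
  have hθc : θ ∈ cone θ β := theta_mem_cone hθ hβ hβ'
  -- a maximizing unit vector
  obtain ⟨v, hvs, hvmax⟩ := (isCompact_sphere (0:E2) 1).exists_isMaxOn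
    (NormedSpace.sphere_nonempty.mpr zero_le_one)
    ((continuous_norm.comp f.continuous).continuousOn)
  have hv : ‖v‖ = 1 := mem_sphere_zero_iff_norm.mp hvs
  have hv0 : v ≠ 0 := fun h => by simp [h] at hv
  have hfnorm : ‖f v‖ = ‖f‖ := by
    refine le_antisymm (by simpa [hv] using f.le_opNorm v) ?_
    refine f.opNorm_le_bound (norm_nonneg (f v)) (fun x => ?_)
    rcases eq_or_ne x 0 with hx0 | hx0
    · simp [hx0]
    · have hz : ‖(‖x‖⁻¹ • x)‖ = 1 := norm_smul_inv_norm hx0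
      have hmem : (‖x‖⁻¹ • x) ∈ Metric.sphere (0:E2) 1 := mem_sphere_zero_iff_norm.mpr hz
      have h1 : ‖f (‖x‖⁻¹ • x)‖ ≤ ‖f v‖ := hvmax hmem
      rw [_root_.map_smul, norm_smul, norm_inv, norm_norm] at h1
      have hxpos : 0 < ‖x‖ := norm_pos_iff.mpr hx0
      rw [inv_mul_le_iff₀ hxpos, mul_comm] at h1
      exact h1
  set T : E2 →L[ℝ] E2 := (ContinuousLinearMap.adjoint f).comp f with hTdef
  have hTapp : ∀ x : E2, T x = (ContinuousLinearMap.adjoint f) (f x) := fun x => rfl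
  have hTsa : IsSelfAdjoint T := by
    rw [ContinuousLinearMap.isSelfAdjoint_iff', hTdef, ContinuousLinearMap.adjoint_comp,
      ContinuousLinearMap.adjoint_adjoint]
  have hTin : ∀ x : E2, ip (T x) x = ‖f x‖^2 := by
    intro x
    rw [ip, hTapp, ContinuousLinearMap.adjoint_inner_left, real_inner_self_eq_norm_sq]
  have hsym : ∀ x z : E2, ip (T x) z = ip x (T z) := by
    intro x z
    have h := ContinuousLinearMap.adjoint_inner_left T z x
    rw [hTsa.adjoint_eq] at h
    exact h
  have hrayval : ∀ z : E2, T.reApplyInnerSelf z = ‖f z‖^2 := by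
    intro z
    rw [ContinuousLinearMap.reApplyInnerSelf_apply]
    simp only [RCLike.re_to_real]
    exact hTin z
  have hmax' : IsMaxOn T.reApplyInnerSelf (Metric.sphere (0:E2) ‖v‖) v := by
    rw [hv]
    intro x hx
    have h1 : ‖f x‖ ≤ ‖f v‖ := hvmax hx
    show T.reApplyInnerSelf x ≤ T.reApplyInnerSelf v
    rw [hrayval, hrayval]
    exact pow_le_pow_left₀ (norm_nonneg _) h1 2
  have hTv : T v = (‖f‖^2) • v := by
    have h1 : T v = (T.rayleighQuotient v : ℝ) • v :=
      hTsa.eq_smul_self_of_isLocalExtrOn (Or.inr hmax'.localize)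
    have h2 : T.rayleighQuotient v = ‖f‖^2 := by
      rw [ContinuousLinearMap.rayleighQuotient, hrayval, hv, hfnorm]
      norm_num
    rw [h1, h2]
  set s : ℝ := ‖f‖ with hsdef
  have hs : 0 < s := by
    have h1 := hT θ (subset_closure hθc) hθ0
    have h2 : f θ ≠ 0 := by
      intro h
      rw [h, map_zero] at h1
      exact h1.1 rfl
    have h3 : 0 < ‖f θ‖ := norm_pos_iff.mpr h2
    have h4 : ‖f θ‖ ≤ s := by simpa [hθ] using f.le_opNorm θ
    linarith
  set w : E2 := perp v with hwdef
  have hw : ‖w‖ = 1 := perp_norm v hv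
  have hvw : ip v w = 0 := perp_inner v
  set t : ℝ := ‖f w‖ with htdef
  have ht0 : 0 ≤ t := norm_nonneg _
  have hts : t ≤ s := by simpa [hw] using f.le_opNorm w
  have hTw : T w = (t^2) • w := by
    have hdec := perp_decomp v hv (T w)
    rw [← hwdef] at hdec
    have e1 : ip (T w) v = 0 := by
      rw [hsym w v, hTv, ip, real_inner_smul_right]
      have : ip w v = 0 := by rw [ip_comm]; exact hvw
      rw [ip] at this
      rw [this, mul_zero]
    have e2 : ip (T w) w = t^2 := by rw [htdef]; exact hTin w
    rw [e1, e2, zero_smul, zero_add] at hdec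
    exact hdec
  clear_value s t
  have key : ∀ y : E2, ‖f y‖^2 = s^2 * (ip y v)^2 + t^2 * (ip y w)^2 := by
    intro y
    have h1 : ip (T y) y = ‖f y‖^2 := hTin y
    have h2 := parseval v hv (T y) y
    have e1 : ip (T y) v = s^2 * ip y v := by
      rw [hsym y v, hTv, ip, real_inner_smul_right]
      rfl
    have e2 : ip (T y) w = t^2 * ip y w := by
      rw [hsym y w, hTw, ip, real_inner_smul_right]
      rfl
    rw [h1, e1, e2] at h2
    rw [h2]
    ring
  intro y hy
  rcases lt_or_ge t s with htlt | htge
  · -- Perron case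
    have hc : 0 < Real.cos (β/2) := cos_half_pos hβ hβ'
    have hc1 : Real.cos (β/2) < 1 := cos_half_lt_one hβ hβ'
    have hkey : ∀ x ∈ cone θ β, Real.cos (β/2) * |ip x v| ≤ |ip x v| * |ip θ v| := by
      intro x hx
      set r : ℝ := (t/s)^2 with hrdef
      have hr0 : 0 ≤ r := sq_nonneg _
      have hr1 : r < 1 := by
        have hq : t/s < 1 := (div_lt_one hs).mpr htlt
        have hq0 : 0 ≤ t/s := div_nonneg ht0 hs.le
        nlinarith
      have hst : t^2 = s^2 * r := by
        rw [hrdef]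
        field_simp
      set u : ℕ → E2 := fun n => ip x v • v + (r^n * ip x w) • w with hudef
      have hu0 : u 0 = x := by
        rw [hudef]
        simp only [pow_zero, one_mul]
        exact (perp_decomp v hv x).symm
      have hstep : ∀ n, T (u n) = (s^2) • u (n+1) := by
        intro n
        rw [hudef]
        simp only [map_add, ContinuousLinearMap.map_smul]
        rw [hTv, hTw]
        rw [smul_add, smul_smul, smul_smul, smul_smul, smul_smul]
        have c1 : ip x v * s^2 = s^2 * ip x v := by ring
        have c2 : r^n * ip x w * t^2 = s^2 * (r^(n+1) * ip x w) := by rw [hst]; ring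
        rw [c1, c2]
      have hmem : ∀ n, u n ∈ cone θ β := by
        intro n
        induction n with
        | zero => rw [hu0]; exact hx
        | succ n ih =>
          have h1 := hT (u n) (subset_closure ih) ih.1
          rw [← hTapp] at h1
          have h3 := cone_smul (c := (s^2)⁻¹) (by positivity) h1
          rw [hstep n, smul_smul, inv_mul_cancel₀ (by positivity), one_smul] at h3
          exact h3
      have hlim : Tendsto u atTop (nhds (ip x v • v)) := by
        have h1 : Tendsto (fun n : ℕ => r^n) atTop (nhds 0) :=
          tendsto_pow_atTop_nhds_zero_of_lt_one hr0 hr1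
        have h2 : Tendsto (fun n : ℕ => (r^n * ip x w) • w) atTop (nhds ((0 * ip x w) • w)) :=
          (h1.mul_const _).smul_const w
        have h3 : Tendsto (fun n : ℕ => ip x v • v + (r^n * ip x w) • w) atTop
            (nhds (ip x v • v + (0 * ip x w) • w)) := Tendsto.add tendsto_const_nhds h2
        simpa [hudef] using h3
      have hmem2 : ip x v • v ∈ closure (cone θ β) :=
        isClosed_closure.mem_of_tendsto hlim
          (Filter.Eventually.of_forall fun n => subset_closure (hmem n))
      have h6 := mem_closure_cone_le hmem2
      rw [norm_smul, real_inner_smul_right, abs_mul, hv, Real.norm_eq_abs, mul_one] at h6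
      calc Real.cos (β/2) * |ip x v| ≤ |ip x v| * |(inner ℝ θ v : ℝ)| := by linarith [h6]
      _ = |ip x v| * |ip θ v| := rfl
    have hvS : Real.cos (β/2) ≤ |ip θ v| := by
      by_cases ha : ip θ v = 0
      · exfalso
        set c := Real.cos (β/2) with hcdef
        clear_value c
        have hcsq : c^2 < 1 := by nlinarith
        set ε : ℝ := Real.sqrt (1/c^2 - 1) / 2 with hedef
        clear_value ε
        have hq : (0:ℝ) < 1/c^2 - 1 := by
          have : 1 < 1/c^2 := by
            rw [lt_div_iff₀ (by positivity : (0:ℝ) < c^2)]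
            nlinarith
          linarith
        have he0 : 0 < ε := by
          rw [hedef]
          positivity
        have hesq : ε^2 = (1/c^2 - 1)/4 := by
          rw [hedef, div_pow, Real.sq_sqrt hq.le]
          norm_num
        have hipx : (inner ℝ θ (θ + ε • v) : ℝ) = 1 := by
          rw [inner_add_right, real_inner_smul_right]
          have h1 : (inner ℝ θ θ : ℝ) = 1 := by
            rw [real_inner_self_eq_norm_sq, hθ]; norm_num
          rw [h1, show (inner ℝ θ v : ℝ) = ip θ v from rfl, ha]
          ring
        have hx : θ + ε • v ∈ cone θ β := by
          constructor
          · intro h0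
            rw [h0] at hipx
            simp at hipx
          · have hn2 : ‖θ + ε • v‖^2 = 1 + ε^2 := by
              rw [norm_add_sq_real, real_inner_smul_right, norm_smul, hθ, hv,
                show (inner ℝ θ v : ℝ) = ip θ v from rfl, ha]
              simp [abs_of_pos he0]
            rw [hipx]
            have hnn : 0 ≤ ‖θ + ε • v‖ := norm_nonneg _
            have hcne : c ≠ 0 := ne_of_gt hc
            have hlt : (c * ‖θ + ε • v‖)^2 < 1 := by
              have e : (c * ‖θ + ε • v‖)^2 = c^2 + c^2 * ε^2 := by
                rw [mul_pow, hn2]; ring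
              have e2 : c^2 * ε^2 = (1 - c^2)/4 := by
                rw [hesq]; field_simp
              rw [e, e2]
              linarith [hcsq]
            have hfin : c * ‖θ + ε • v‖ < 1 := by
              nlinarith [mul_nonneg hc.le hnn]
            rw [← hcdef]
            simpa using hfin
        have h7 := hkey _ hx
        have h8 : ip (θ + ε • v) v = ε := by
          rw [ip, inner_add_left, real_inner_smul_left, real_inner_self_eq_norm_sq, hv,
            show (inner ℝ θ v : ℝ) = ip θ v from rfl, ha]
          ring
        rw [h8, ha, abs_of_pos he0, abs_zero, mul_zero] at h7
        nlinarith [mul_pos hc he0]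
      · have h7 := hkey θ hθc
        have h8 : 0 < |ip θ v| := abs_pos.mpr ha
        nlinarith
    have hy2 : Real.cos (β/2) * ‖y‖ ≤ |ip θ y| := mem_closure_cone_le hy
    have hang : Real.cos β * ‖y‖ ≤ |ip y v| := inner_lower θ hθ β hβ hβ' v hv hvS y hy2
    have hcos0 : 0 < Real.cos β :=
      Real.cos_pos_of_mem_Ioo ⟨by linarith [Real.pi_pos], hβ'⟩
    have hfy2 : s^2 * (ip y v)^2 ≤ ‖f y‖^2 := by
      rw [key y]
      nlinarith [sq_nonneg (ip y w), sq_nonneg t]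
    have h10 : (Real.cos β * ‖y‖)^2 ≤ (ip y v)^2 := by
      nlinarith [hang, abs_nonneg (ip y v), sq_abs (ip y v),
        mul_nonneg hcos0.le (norm_nonneg y)]
    have h9 : (Real.cos β * s * ‖y‖)^2 ≤ ‖f y‖^2 := by
      have h11 : s^2 * (Real.cos β * ‖y‖)^2 ≤ s^2 * (ip y v)^2 :=
        mul_le_mul_of_nonneg_left h10 (sq_nonneg s)
      calc (Real.cos β * s * ‖y‖)^2 = s^2 * (Real.cos β * ‖y‖)^2 := by ring
      _ ≤ s^2 * (ip y v)^2 := h11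
      _ ≤ ‖f y‖^2 := hfy2
    nlinarith [h9, norm_nonneg (f y),
      mul_nonneg (mul_nonneg hcos0.le hs.le) (norm_nonneg y)]
  · -- t = s case
    have hts' : t = s := le_antisymm hts htge
    have hyy : (ip y v)^2 + (ip y w)^2 = ‖y‖^2 := by
      have h := parseval v hv y y
      rw [ip_self] at h
      nlinarith [h]
    have hyn : ‖f y‖^2 = s^2 * ‖y‖^2 := by
      rw [key y, hts']
      nlinarith [hyy]
    have heq : ‖f y‖ = s * ‖y‖ := by
      have h1 := congrArg Real.sqrt hyn
      rw [Real.sqrt_sq (norm_nonneg _),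
        show s^2*‖y‖^2 = (s*‖y‖)^2 by ring,
        Real.sqrt_sq (by positivity)] at h1
      exact h1
    rw [heq]
    have hcos1 : Real.cos β ≤ 1 := Real.cos_le_one β
    nlinarith [mul_nonneg hs.le (norm_nonneg y), hcos1]


lemma mLin_apply (M : Matrix (Fin 2) (Fin 2) ℝ) (x : E2) :
    mLin M x = Matrix.toEuclideanLin M x := rfl

lemma adjoint_mLin (M : Matrix (Fin 2) (Fin 2) ℝ) (z : E2) :
    ContinuousLinearMap.adjoint (mLin M) z = Matrix.toEuclideanLin Mᵀ z := by
  have h2 : Mᴴ = Mᵀ := by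
    ext i j
    simp [Matrix.conjTranspose_apply]
  have h1 := Matrix.toEuclideanLin_conjTranspose_eq_adjoint M
  rw [h2] at h1
  rw [h1, LinearMap.adjoint_eq_toCLM_adjoint]
  rfl

set_option maxHeartbeats 1600000 in
/-- Lemma 4.1 (second part): under (K1a) and (K1b),
`α₁(A_{li lj}) ≥ cos²(β) α₁(A_li) α₁(A_lj)` for all finite words `li, lj`. -/
theorem a1_supermultiplicative (κ : ℕ) (hκ : 2 ≤ κ)
    (A : Fin κ → Matrix (Fin 2) (Fin 2) ℝ)
    (hinv : ∀ i, IsUnit (A i).det) (hnorm : ∀ i, a1 (A i) < 1)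
    (θ : E2) (hθ : ‖θ‖ = 1) (β : ℝ) (hβ : 0 < β) (hβ' : β < π / 2)
    (hK1a : ∀ i, ∀ x ∈ closure (cone θ β), x ≠ 0 → Matrix.toEuclideanLin (A i) x ∈ cone θ β)
    (hK1b : ∀ i, ∀ x ∈ closure (cone θ β), x ≠ 0 → Matrix.toEuclideanLin (A i)ᵀ x ∈ cone θ β) :
    ∀ li lj : List (Fin κ), li ≠ [] → lj ≠ [] →
      Real.cos β ^ 2 * a1 (wprod A li) * a1 (wprod A lj) ≤ a1 (wprod A (li ++ lj)) := by
  have hθ0 : θ ≠ 0 := fun h => by simp [h] at hθ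
  have hθc : θ ∈ cone θ β := theta_mem_cone hθ hβ hβ'
  have hconeP : ∀ (l : List (Fin κ)), l ≠ [] →
      (∀ x ∈ closure (cone θ β), x ≠ 0 → Matrix.toEuclideanLin (wprod A l) x ∈ cone θ β)
      ∧ (∀ x ∈ closure (cone θ β), x ≠ 0 → Matrix.toEuclideanLin (wprod A l)ᵀ x ∈ cone θ β) := by
    intro l hl
    constructor
    · apply prod_preserves θ β (l.map A) (by simpa using hl)
      intro M hM
      obtain ⟨i, _, rfl⟩ := List.mem_map.mp hM
      exact hK1a i
    · rw [wprod, Matrix.transpose_list_prod]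
      apply prod_preserves θ β _ (by simp [hl])
      intro M hM
      rw [List.mem_reverse, List.map_map, List.mem_map] at hM
      obtain ⟨i, _, rfl⟩ := hM
      exact hK1b i
  have hcore : ∀ (l : List (Fin κ)), l ≠ [] →
      ∀ y ∈ closure (cone θ β), Real.cos β * a1 (wprod A l) * ‖y‖ ≤ ‖mLin (wprod A l) y‖ := by
    intro l hl
    apply core θ hθ β hβ hβ'
    intro x hx hx0
    obtain ⟨hP1, hP2⟩ := hconeP l hl
    have h1 := hP1 x hx hx0
    have h2 := hP2 _ (subset_closure h1) h1.1
    rw [adjoint_mLin, mLin_apply]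
    exact h2
  intro li lj hli hlj
  have h1 : Real.cos β * a1 (wprod A lj) * ‖θ‖ ≤ ‖mLin (wprod A lj) θ‖ :=
    hcore lj hlj θ (subset_closure hθc)
  rw [hθ, mul_one] at h1
  have h2 : mLin (wprod A lj) θ ∈ cone θ β :=
    (hconeP lj hlj).1 θ (subset_closure hθc) hθ0
  have h3 : Real.cos β * a1 (wprod A li) * ‖mLin (wprod A lj) θ‖ ≤
      ‖mLin (wprod A li) (mLin (wprod A lj) θ)‖ :=
    hcore li hli _ (subset_closure h2)
  have happ : mLin (wprod A (li ++ lj)) θ = mLin (wprod A li) (mLin (wprod A lj) θ) := by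
    have hmul : wprod A (li ++ lj) = wprod A li * wprod A lj := by
      rw [wprod, wprod, wprod, List.map_append, List.prod_append]
    rw [mLin_apply, mLin_apply, mLin_apply, hmul]
    exact toEuc_mul _ _ θ
  have h4 : ‖mLin (wprod A (li ++ lj)) θ‖ ≤ a1 (wprod A (li ++ lj)) := by
    have h := (mLin (wprod A (li ++ lj))).le_opNorm θ
    rw [hθ, mul_one] at h
    exact h
  have hcos0 : 0 < Real.cos β :=
    Real.cos_pos_of_mem_Ioo ⟨by linarith [Real.pi_pos], hβ'⟩
  have ha1i : (0:ℝ) ≤ a1 (wprod A li) := norm_nonneg _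
  calc Real.cos β ^ 2 * a1 (wprod A li) * a1 (wprod A lj)
      = Real.cos β * a1 (wprod A li) * (Real.cos β * a1 (wprod A lj)) := by ring
  _ ≤ Real.cos β * a1 (wprod A li) * ‖mLin (wprod A lj) θ‖ :=
      mul_le_mul_of_nonneg_left h1 (mul_nonneg hcos0.le ha1i)
  _ ≤ ‖mLin (wprod A li) (mLin (wprod A lj) θ)‖ := h3
  _ = ‖mLin (wprod A (li ++ lj)) θ‖ := by rw [happ]
  _ ≤ a1 (wprod A (li ++ lj)) := h4

end
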